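/- Let (H,x) be a properly r-boundaried weighted graph and let p be a positive integer. Suppose that for every connected component C of H containing a vertex outside the boundary x there is a vertex v ∈ V(C)∖x with λ_H(x∩V(C), v) ≤ p. Then there exists a properly r-boundaried weighted graph (H',x') with at most 2^{2^{r−1}} + r vertices such that (a) for every r-boundaried weighted graph (F,y), if (F,y)⊕_b(H,x) is connected with λ((F,y)⊕_b(H,x)) ≤ p, then λ((F,y)⊕_b(H',x')) = λ((F,y)⊕_b(H,x)); and (b) for every connected component C' of H' containing a vertex outside x' there is a vertex v ∈ V(C')∖x' with λ_{H'}(x'∩V(C'), v) ≤ p. -/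

import Mathlib

open scoped Classical

/-- The weighted connectivity of `(G,w)`: the largest `k ∈ ℕ∞` such that deleting any
edge set of total weight at most `k - 1` leaves `G` connected (`+∞` for a one-vertex
graph). -/
noncomputable def weightConn {V : Type*} [Fintype V] (G : SimpleGraph V) (w : Sym2 V → ℕ) :
    ℕ∞ :=
  sSup {k : ℕ∞ | ∀ S : Finset (Sym2 V), ↑S ⊆ G.edgeSet →
    (∑ e ∈ S, (w e : ℕ∞)) < k → (G.deleteEdges ↑S).Connected}

/-- The minimum total weight of an `(A,B)`-separator: an edge set `S` such that `G - S`
has no path from a vertex of `A` to a vertex of `B` (`+∞` if no separator exists). -/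
noncomputable def sepW {V : Type*} [Fintype V] (G : SimpleGraph V) (w : Sym2 V → ℕ)
    (A B : Set V) : ℕ∞ :=
  sInf {c : ℕ∞ | ∃ S : Finset (Sym2 V), ↑S ⊆ G.edgeSet ∧ (∑ e ∈ S, (w e : ℕ∞)) = c ∧
    ∀ a ∈ A, ∀ b ∈ B, ¬ (G.deleteEdges ↑S).Reachable a b}

/-- `(H,x)` is a properly `r`-boundaried graph: the boundary vertices are pairwise
nonadjacent and every connected component of `H` contains a boundary vertex. -/
def ProperB {VH : Type*} {r : ℕ} (H : SimpleGraph VH) (x : Fin r ↪ VH) : Prop :=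
  (∀ i j, ¬ H.Adj (x i) (x j)) ∧ ∀ v : VH, ∃ i, H.Reachable v (x i)

/-- Every connected component of `H` containing a vertex outside the boundary `x` has a
vertex `v` outside the boundary with `λ_H(x ∩ V(C), v) ≤ p`. -/
def BdryReach {VH : Type*} {r : ℕ} [Fintype VH] (H : SimpleGraph VH) (wH : Sym2 VH → ℕ)
    (x : Fin r ↪ VH) (p : ℕ) : Prop :=
  ∀ c : H.ConnectedComponent, (∃ u ∈ c.supp, u ∉ Set.range ⇑x) →
    ∃ v ∈ c.supp, v ∉ Set.range ⇑x ∧ sepW H wH (Set.range ⇑x ∩ c.supp) {v} ≤ (p : ℕ∞)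

/-- The boundary sum `(F,y) ⊕_b (H,x)`: disjoint copies of `F` and `H` with the `i`-th
boundary vertex of `H` identified with the `i`-th boundary vertex of `F`. -/
def BSum {VF VH : Type*} {r : ℕ} (F : SimpleGraph VF) (y : Fin r → VF)
    (H : SimpleGraph VH) (x : Fin r → VH) :
    SimpleGraph (VF ⊕ {v : VH // v ∉ Set.range x}) :=
  SimpleGraph.fromRel fun a b =>
    match a, b with
    | Sum.inl a, Sum.inl b => F.Adj a b
    | Sum.inr a, Sum.inr b => H.Adj a.1 b.1
    | Sum.inl a, Sum.inr b => ∃ i, y i = a ∧ H.Adj (x i) b.1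
    | Sum.inr _, Sum.inl _ => False

/-- Auxiliary (ordered) weight function for the boundary sum. -/
noncomputable def bw {VF VH : Type*} {r : ℕ} (wF : Sym2 VF → ℕ) (wH : Sym2 VH → ℕ)
    (y : Fin r → VF) (x : Fin r → VH) :
    (VF ⊕ {v : VH // v ∉ Set.range x}) → (VF ⊕ {v : VH // v ∉ Set.range x}) → ℕ
  | Sum.inl a, Sum.inl b => wF s(a, b)
  | Sum.inr a, Sum.inr b => wH s(a.1, b.1)
  | Sum.inl a, Sum.inr b => ∑ i : Fin r, if y i = a then wH s(x i, b.1) else 0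
  | Sum.inr a, Sum.inl b => ∑ i : Fin r, if y i = b then wH s(x i, a.1) else 0

/-- The edge weights of the boundary sum `(F,y) ⊕_b (H,x)`, inherited from `wF` and
`wH`. -/
noncomputable def BSumW {VF VH : Type*} {r : ℕ} (wF : Sym2 VF → ℕ) (wH : Sym2 VH → ℕ)
    (y : Fin r → VF) (x : Fin r → VH) :
    Sym2 (VF ⊕ {v : VH // v ∉ Set.range x}) → ℕ :=
  Sym2.lift ⟨bw wF wH y x, by
    intro u v
    cases u <;> cases v <;> simp only [bw] <;> first | rfl | rw [Sym2.eq_swap]⟩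

def cross {V : Type*} (X : Set V) (e : Sym2 V) : Prop :=
  ∃ a b, e = s(a, b) ∧ a ∈ X ∧ b ∉ X

lemma cross_mk {V : Type*} (X : Set V) (a b : V) :
    cross X s(a, b) ↔ (a ∈ X ∧ b ∉ X) ∨ (b ∈ X ∧ a ∉ X) := by
  constructor
  · rintro ⟨c, d, h, hc, hd⟩
    rw [Sym2.eq_iff] at h
    rcases h with ⟨rfl, rfl⟩ | ⟨rfl, rfl⟩
    · exact Or.inl ⟨hc, hd⟩
    · exact Or.inr ⟨hc, hd⟩
  · rintro (⟨h1, h2⟩ | ⟨h1, h2⟩)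
    · exact ⟨a, b, rfl, h1, h2⟩
    · exact ⟨b, a, Sym2.eq_swap.symm, h1, h2⟩

lemma cross_compl {V : Type*} (X : Set V) (e : Sym2 V) : cross Xᶜ e ↔ cross X e := by
  induction e using Sym2.ind with
  | _ a b =>
    rw [cross_mk, cross_mk]
    simp only [Set.mem_compl_iff, not_not]
    tauto

noncomputable def cutw {V : Type*} [Fintype V] (G : SimpleGraph V) (w : Sym2 V → ℕ)
    (X : Set V) : ℕ :=
  ∑ e ∈ G.edgeFinset.filter (fun e => cross X e), w e

lemma cutw_compl {V : Type*} [Fintype V] (G : SimpleGraph V) (w : Sym2 V → ℕ) (X : Set V) :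
    cutw G w Xᶜ = cutw G w X := by
  unfold cutw
  congr 1
  apply Finset.filter_congr
  intro e _
  simp [cross_compl]

lemma not_reachable_delete {V : Type*} (G : SimpleGraph V) (s : Set (Sym2 V)) (X : Set V)
    (hs : ∀ u v, G.Adj u v → u ∈ X → v ∉ X → s(u, v) ∈ s) {a b : V} (ha : a ∈ X)
    (hb : b ∉ X) : ¬ (G.deleteEdges s).Reachable a b := by
  rintro ⟨p⟩
  obtain ⟨d, _, h1, h2⟩ := p.exists_boundary_dart X ha hb
  have hadj := d.adj
  rw [SimpleGraph.deleteEdges_adj] at hadj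
  exact hadj.2 (hs _ _ hadj.1 h1 h2)

lemma crossFinset_subset_of_not_reachable {V : Type*} [Fintype V] (G : SimpleGraph V)
    (S : Finset (Sym2 V)) (a : V) :
    G.edgeFinset.filter (fun e => cross {u | (G.deleteEdges ↑S).Reachable a u} e) ⊆ S := by
  intro e he
  rw [Finset.mem_filter] at he
  obtain ⟨hee, u, v, rfl, hu, hv⟩ := he
  by_contra hne
  exact hv (hu.trans (SimpleGraph.Adj.reachable (by
    rw [SimpleGraph.deleteEdges_adj]
    exact ⟨(SimpleGraph.mem_edgeSet G).mp (SimpleGraph.mem_edgeFinset.mp hee), hne⟩)))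

lemma weightConn_eq_iInf {V : Type*} [Fintype V] [Nonempty V] (G : SimpleGraph V)
    (w : Sym2 V → ℕ) :
    weightConn G w
      = ⨅ (X : Set V) (_ : X.Nonempty) (_ : Xᶜ.Nonempty), (cutw G w X : ℕ∞) := by
  apply le_antisymm
  · apply sSup_le
    intro k hk
    refine le_iInf fun X => le_iInf fun hX => le_iInf fun hXc => ?_
    by_contra hlt
    have hlt : (cutw G w X : ℕ∞) < k := lt_of_not_ge hlt
    set S := G.edgeFinset.filter (fun e => cross X e) with hS
    have hsub : ↑S ⊆ G.edgeSet := by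
      intro e he
      rw [Finset.mem_coe, hS, Finset.mem_filter] at he
      exact SimpleGraph.mem_edgeFinset.mp he.1
    have hsum : (∑ e ∈ S, (w e : ℕ∞)) = (cutw G w X : ℕ∞) := by
      rw [cutw, Nat.cast_sum]
    have hconn := hk S hsub (hsum ▸ hlt)
    obtain ⟨a, ha⟩ := hX
    obtain ⟨b, hb⟩ := hXc
    refine not_reachable_delete G (↑S) X ?_ ha hb (hconn.preconnected a b)
    intro u v huv hu hv
    rw [Finset.mem_coe, hS, Finset.mem_filter]
    exact ⟨SimpleGraph.mem_edgeFinset.mpr ((SimpleGraph.mem_edgeSet G).mpr huv),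
      u, v, rfl, hu, hv⟩
  · apply le_sSup
    intro S hS hlt
    rw [SimpleGraph.connected_iff]
    refine ⟨fun a b => ?_, by infer_instance⟩
    by_contra hab
    set X := {u | (G.deleteEdges ↑S).Reachable a u} with hXdef
    have ha : a ∈ X := SimpleGraph.Reachable.refl a
    have hb : b ∉ X := hab
    have hsub := crossFinset_subset_of_not_reachable G S a
    have h1 : (cutw G w X : ℕ∞) ≤ ∑ e ∈ S, (w e : ℕ∞) := by
      rw [cutw, Nat.cast_sum]
      exact Finset.sum_le_sum_of_subset hsub
    have h2 : (⨅ (X : Set V) (_ : X.Nonempty) (_ : Xᶜ.Nonempty), (cutw G w X : ℕ∞))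
        ≤ (cutw G w X : ℕ∞) := by
      refine iInf_le_of_le X (le_trans (iInf_le_of_le ⟨a, ha⟩ ?_) le_rfl)
      exact iInf_le_of_le ⟨b, hb⟩ le_rfl
    exact absurd (lt_of_le_of_lt (h2.trans h1) hlt) (lt_irrefl _)

section BSumLemmas
variable {VF VH : Type*} {r : ℕ} (F : SimpleGraph VF) (y : Fin r → VF)
  (H : SimpleGraph VH) (x : Fin r → VH)

lemma BSum_adj_inl_inl (a b : VF) :
    (BSum F y H x).Adj (Sum.inl a) (Sum.inl b) ↔ F.Adj a b := by
  rw [BSum, SimpleGraph.fromRel_adj]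
  constructor
  · rintro ⟨-, h | h⟩
    · exact h
    · exact h.symm
  · intro h
    exact ⟨by simp [h.ne], Or.inl h⟩

lemma BSum_adj_inr_inr (a b : {v : VH // v ∉ Set.range x}) :
    (BSum F y H x).Adj (Sum.inr a) (Sum.inr b) ↔ H.Adj a.1 b.1 := by
  rw [BSum, SimpleGraph.fromRel_adj]
  constructor
  · rintro ⟨-, h | h⟩
    · exact h
    · exact h.symm
  · intro h
    exact ⟨by simp [Subtype.ext_iff, h.ne], Or.inl h⟩

lemma BSum_adj_inl_inr (a : VF) (b : {v : VH // v ∉ Set.range x}) :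
    (BSum F y H x).Adj (Sum.inl a) (Sum.inr b) ↔ ∃ i, y i = a ∧ H.Adj (x i) b.1 := by
  rw [BSum, SimpleGraph.fromRel_adj]
  constructor
  · rintro ⟨-, h | h⟩
    · exact h
    · exact h.elim
  · intro h
    exact ⟨by simp, Or.inl h⟩

end BSumLemmas

noncomputable def mu {VF VH : Type*} {r : ℕ} (y : Fin r → VF) (x : Fin r ↪ VH) :
    VH → VF ⊕ {v : VH // v ∉ Set.range ⇑x} :=
  fun v => if h : v ∈ Set.range ⇑x then Sum.inl (y h.choose) else Sum.inr ⟨v, h⟩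

section MuLemmas
variable {VF VH : Type*} {r : ℕ} (y : Fin r → VF) (x : Fin r ↪ VH)

lemma mu_x (i : Fin r) : mu y x (x i) = Sum.inl (y i) := by
  have h : (x i : VH) ∈ Set.range ⇑x := ⟨i, rfl⟩
  rw [mu, dif_pos h]
  congr 1
  exact congrArg y (x.injective h.choose_spec)

lemma mu_int (v : VH) (h : v ∉ Set.range ⇑x) : mu y x v = Sum.inr ⟨v, h⟩ := dif_neg h

lemma mu_inl_iff (v : VH) : (∃ a, mu y x v = Sum.inl a) ↔ v ∈ Set.range ⇑x := by
  constructor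
  · rintro ⟨a, ha⟩
    by_contra h
    rw [mu_int y x v h] at ha
    cases ha
  · rintro ⟨i, rfl⟩
    exact ⟨y i, mu_x y x i⟩

lemma mu_injective (hy : Function.Injective y) : Function.Injective (mu y x) := by
  intro u v huv
  by_cases hu : u ∈ Set.range ⇑x <;> by_cases hv : v ∈ Set.range ⇑x
  · obtain ⟨i, rfl⟩ := hu
    obtain ⟨j, rfl⟩ := hv
    rw [mu_x, mu_x] at huv
    exact congrArg x (hy (Sum.inl_injective huv))
  · rw [mu_int y x v hv] at huv
    obtain ⟨i, rfl⟩ := hu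
    rw [mu_x] at huv
    cases huv
  · rw [mu_int y x u hu] at huv
    obtain ⟨j, rfl⟩ := hv
    rw [mu_x] at huv
    cases huv
  · rw [mu_int y x u hu, mu_int y x v hv] at huv
    exact congrArg Subtype.val (Sum.inr_injective huv)

end MuLemmas

section WeightLemmas
variable {VF VH : Type*} {r : ℕ} (F : SimpleGraph VF) (wF : Sym2 VF → ℕ)
  (wH : Sym2 VH → ℕ) (y : Fin r ↪ VF) (H : SimpleGraph VH) (x : Fin r ↪ VH)

lemma BSumW_inl_inl (a b : VF) :
    BSumW wF wH ⇑y ⇑x s(Sum.inl a, Sum.inl b) = wF s(a, b) := rfl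

lemma if_sum_eq (i : Fin r) (b : VH) :
    (∑ j : Fin r, if y j = y i then wH s(x j, b) else 0) = wH s(x i, b) := by
  rw [Finset.sum_eq_single i]
  · simp
  · intro j _ hj
    rw [if_neg fun h => hj (y.injective h)]
  · simp

lemma BSumW_map_mu (hbb : ∀ i j, ¬ H.Adj (x i) (x j)) (e : Sym2 VH) (he : e ∈ H.edgeSet) :
    BSumW wF wH ⇑y ⇑x (Sym2.map (mu ⇑y x) e) = wH e := by
  induction e using Sym2.ind with
  | _ u v =>
    have hadj : H.Adj u v := (SimpleGraph.mem_edgeSet H).mp he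
    rw [Sym2.map_pair_eq]
    by_cases hu : u ∈ Set.range ⇑x <;> by_cases hv : v ∈ Set.range ⇑x
    · obtain ⟨i, rfl⟩ := hu
      obtain ⟨j, rfl⟩ := hv
      exact absurd hadj (hbb i j)
    · obtain ⟨i, rfl⟩ := hu
      rw [mu_x, mu_int ⇑y x v hv]
      show (∑ j : Fin r, if y j = y i then wH s(x j, v) else 0) = _
      rw [if_sum_eq wH y x i v]
    · obtain ⟨j, rfl⟩ := hv
      rw [mu_x, mu_int ⇑y x u hu]
      show (∑ i : Fin r, if y i = y j then wH s(x i, u) else 0) = _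
      rw [if_sum_eq wH y x j u, Sym2.eq_swap]
    · rw [mu_int ⇑y x u hu, mu_int ⇑y x v hv]
      rfl

lemma BSum_mem_map_mu (hbb : ∀ i j, ¬ H.Adj (x i) (x j)) {u v : VH} (hadj : H.Adj u v) :
    Sym2.map (mu ⇑y x) s(u, v) ∈ (BSum F ⇑y H ⇑x).edgeSet := by
  rw [Sym2.map_pair_eq, SimpleGraph.mem_edgeSet]
  by_cases hu : u ∈ Set.range ⇑x <;> by_cases hv : v ∈ Set.range ⇑x
  · obtain ⟨i, rfl⟩ := hu
    obtain ⟨j, rfl⟩ := hv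
    exact absurd hadj (hbb i j)
  · obtain ⟨i, rfl⟩ := hu
    rw [mu_x, mu_int ⇑y x v hv, BSum_adj_inl_inr]
    exact ⟨i, rfl, hadj⟩
  · obtain ⟨j, rfl⟩ := hv
    rw [mu_x, mu_int ⇑y x u hu]
    apply SimpleGraph.Adj.symm
    rw [BSum_adj_inl_inr]
    exact ⟨j, rfl, hadj.symm⟩
  · rw [mu_int ⇑y x u hu, mu_int ⇑y x v hv, BSum_adj_inr_inr]
    exact hadj

lemma BSum_edge_rep (hbb : ∀ i j, ¬ H.Adj (x i) (x j)) (E : Sym2 (VF ⊕ {v : VH // v ∉ Set.range ⇑x}))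
    (hE : E ∈ (BSum F ⇑y H ⇑x).edgeSet) :
    (∃ a b, F.Adj a b ∧ E = s(Sum.inl a, Sum.inl b)) ∨
    (∃ u v, H.Adj u v ∧ E = Sym2.map (mu ⇑y x) s(u, v)) := by
  induction E using Sym2.ind with
  | _ c d =>
    rw [SimpleGraph.mem_edgeSet] at hE
    match c, d with
    | Sum.inl a, Sum.inl b =>
      exact Or.inl ⟨a, b, (BSum_adj_inl_inl F ⇑y H ⇑x a b).mp hE, rfl⟩
    | Sum.inl a, Sum.inr b =>
      obtain ⟨i, rfl, hadj⟩ := (BSum_adj_inl_inr F ⇑y H ⇑x a b).mp hE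
      refine Or.inr ⟨x i, b.1, hadj, ?_⟩
      rw [Sym2.map_pair_eq, mu_x, mu_int ⇑y x b.1 b.2]
    | Sum.inr a, Sum.inl b =>
      obtain ⟨i, rfl, hadj⟩ := (BSum_adj_inl_inr F ⇑y H ⇑x b a).mp hE.symm
      refine Or.inr ⟨a.1, x i, hadj.symm, ?_⟩
      rw [Sym2.map_pair_eq, mu_x, mu_int ⇑y x a.1 a.2]
    | Sum.inr a, Sum.inr b =>
      refine Or.inr ⟨a.1, b.1, (BSum_adj_inr_inr F ⇑y H ⇑x a b).mp hE, ?_⟩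
      rw [Sym2.map_pair_eq, mu_int ⇑y x a.1 a.2, mu_int ⇑y x b.1 b.2]

end WeightLemmas

lemma cross_map {α β : Type*} (f : α → β) (X : Set β) (e : Sym2 α) :
    cross X (Sym2.map f e) ↔ cross (f ⁻¹' X) e := by
  induction e using Sym2.ind with
  | _ a b =>
    rw [Sym2.map_pair_eq, cross_mk, cross_mk]
    simp only [Set.mem_preimage]

lemma BSumW_map_inl {VF VH : Type*} {r : ℕ} (wF : Sym2 VF → ℕ) (wH : Sym2 VH → ℕ)
    (y : Fin r → VF) (x : Fin r → VH) (e : Sym2 VF) :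
    BSumW wF wH y x (Sym2.map Sum.inl e) = wF e := by
  induction e using Sym2.ind with
  | _ a b => rw [Sym2.map_pair_eq]; rfl

lemma cutw_BSum {VF VH : Type*} {r : ℕ} [Fintype VF] [Fintype VH]
    (F : SimpleGraph VF) (wF : Sym2 VF → ℕ) (y : Fin r ↪ VF)
    (H : SimpleGraph VH) (wH : Sym2 VH → ℕ) (x : Fin r ↪ VH)
    {instS : Fintype (VF ⊕ {v : VH // v ∉ Set.range ⇑x})}
    (hbb : ∀ i j, ¬ H.Adj (x i) (x j))
    (X : Set (VF ⊕ {v : VH // v ∉ Set.range ⇑x})) :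
    @cutw _ instS (BSum F ⇑y H ⇑x) (BSumW wF wH ⇑y ⇑x) X
      = cutw F wF (Sum.inl ⁻¹' X) + cutw H wH (mu ⇑y x ⁻¹' X) := by
  classical
  set G := BSum F ⇑y H ⇑x with hG
  set pF : Sym2 (VF ⊕ {v : VH // v ∉ Set.range ⇑x}) → Prop :=
    fun E => ∃ a b, E = s(Sum.inl a, Sum.inl b) with hpF
  rw [cutw, ← Finset.sum_filter_add_sum_filter_not (G.edgeFinset.filter (fun e => cross X e)) pF]
  congr 1
  · have himg : (G.edgeFinset.filter (fun e => cross X e)).filter pF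
        = (F.edgeFinset.filter (fun e => cross (Sum.inl ⁻¹' X) e)).image (Sym2.map Sum.inl) := by
      ext E
      simp only [Finset.mem_filter, Finset.mem_image, SimpleGraph.mem_edgeFinset]
      constructor
      · rintro ⟨⟨hE, hcr⟩, a, b, rfl⟩
        refine ⟨s(a, b), ⟨?_, ?_⟩, by rw [Sym2.map_pair_eq]⟩
        · rw [SimpleGraph.mem_edgeSet] at hE ⊢
          exact (BSum_adj_inl_inl F ⇑y H ⇑x a b).mp hE
        · rw [← cross_map Sum.inl X]
          rwa [Sym2.map_pair_eq]
      · rintro ⟨e, ⟨he, hcr⟩, rfl⟩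
        induction e using Sym2.ind with
        | _ a b =>
          rw [Sym2.map_pair_eq]
          refine ⟨⟨?_, ?_⟩, a, b, rfl⟩
          · rw [SimpleGraph.mem_edgeSet] at he ⊢
            exact (BSum_adj_inl_inl F ⇑y H ⇑x a b).mpr he
          · rw [← Sym2.map_pair_eq Sum.inl, cross_map Sum.inl X]
            exact hcr
    rw [himg, Finset.sum_image (fun e _ e' _ h =>
      Sym2.map.injective Sum.inl_injective h)]
    exact Finset.sum_congr rfl fun e _ => BSumW_map_inl wF wH ⇑y ⇑x e
  · have himg : (G.edgeFinset.filter (fun e => cross X e)).filter (fun E => ¬ pF E)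
        = (H.edgeFinset.filter (fun e => cross (mu ⇑y x ⁻¹' X) e)).image
            (Sym2.map (mu ⇑y x)) := by
      ext E
      simp only [Finset.mem_filter, Finset.mem_image, SimpleGraph.mem_edgeFinset]
      constructor
      · rintro ⟨⟨hE, hcr⟩, hnpF⟩
        rcases BSum_edge_rep F y H x hbb E hE with ⟨a, b, _, rfl⟩ | ⟨u, v, hadj, rfl⟩
        · exact absurd ⟨a, b, rfl⟩ hnpF
        · refine ⟨s(u, v), ⟨(SimpleGraph.mem_edgeSet H).mpr hadj, ?_⟩, rfl⟩
          rw [← cross_map (mu ⇑y x) X]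
          exact hcr
      · rintro ⟨e, ⟨he, hcr⟩, rfl⟩
        induction e using Sym2.ind with
        | _ u v =>
          have hadj : H.Adj u v := (SimpleGraph.mem_edgeSet H).mp he
          refine ⟨⟨BSum_mem_map_mu F y H x hbb hadj, ?_⟩, ?_⟩
          · rw [cross_map (mu ⇑y x) X]
            exact hcr
          · rintro ⟨a, b, heq⟩
            rw [Sym2.map_pair_eq, Sym2.eq_iff] at heq
            have hu : u ∈ Set.range ⇑x := by
              rcases heq with ⟨h1, -⟩ | ⟨h1, -⟩ <;>
                exact (mu_inl_iff ⇑y x u).mp ⟨_, h1⟩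
            have hv : v ∈ Set.range ⇑x := by
              rcases heq with ⟨-, h2⟩ | ⟨-, h2⟩ <;>
                exact (mu_inl_iff ⇑y x v).mp ⟨_, h2⟩
            obtain ⟨i, rfl⟩ := hu
            obtain ⟨j, rfl⟩ := hv
            exact hbb i j hadj
    rw [himg, Finset.sum_image (fun e _ e' _ h =>
      Sym2.map.injective (mu_injective ⇑y x y.injective) h)]
    refine Finset.sum_congr rfl fun e he => ?_
    rw [Finset.mem_filter, SimpleGraph.mem_edgeFinset] at he
    exact BSumW_map_mu wF wH y H x hbb e he.1

def pushGraph {V W : Type*} (H : SimpleGraph V) (φ : V → W) : SimpleGraph W :=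
  SimpleGraph.fromRel fun a b => ∃ u v, H.Adj u v ∧ φ u = a ∧ φ v = b

lemma pushGraph_adj {V W : Type*} (H : SimpleGraph V) (φ : V → W) (a b : W) :
    (pushGraph H φ).Adj a b ↔ a ≠ b ∧ ∃ u v, H.Adj u v ∧ φ u = a ∧ φ v = b := by
  rw [pushGraph, SimpleGraph.fromRel_adj]
  constructor
  · rintro ⟨hne, ⟨u, v, h1, h2, h3⟩ | ⟨u, v, h1, h2, h3⟩⟩
    · exact ⟨hne, u, v, h1, h2, h3⟩
    · exact ⟨hne, v, u, h1.symm, h3, h2⟩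
  · rintro ⟨hne, u, v, h1, h2, h3⟩
    exact ⟨hne, Or.inl ⟨u, v, h1, h2, h3⟩⟩

noncomputable def pushW {V W : Type*} [Fintype V] (H : SimpleGraph V) (wH : Sym2 V → ℕ)
    (φ : V → W) : Sym2 W → ℕ :=
  fun E => ∑ e ∈ H.edgeFinset.filter (fun e => Sym2.map φ e = E), wH e

lemma pushGraph_mem_edgeSet {V W : Type*} (H : SimpleGraph V) (φ : V → W) {u v : V}
    (hadj : H.Adj u v) (hne : φ u ≠ φ v) :
    Sym2.map φ s(u, v) ∈ (pushGraph H φ).edgeSet := by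
  rw [Sym2.map_pair_eq, SimpleGraph.mem_edgeSet, pushGraph_adj]
  exact ⟨hne, u, v, hadj, rfl, rfl⟩

lemma cutw_pushGraph {V W : Type*} [Fintype V] [Fintype W] (H : SimpleGraph V)
    (wH : Sym2 V → ℕ) (φ : V → W) (Z : Set W) :
    cutw (pushGraph H φ) (pushW H wH φ) Z = cutw H wH (φ ⁻¹' Z) := by
  classical
  rw [cutw]
  show (∑ E ∈ (pushGraph H φ).edgeFinset.filter (fun e => cross Z e),
    ∑ e ∈ H.edgeFinset.filter (fun e => Sym2.map φ e = E), wH e) = _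
  rw [Finset.sum_fiberwise_eq_sum_filter H.edgeFinset
    ((pushGraph H φ).edgeFinset.filter (fun e => cross Z e)) (Sym2.map φ) wH]
  rw [cutw]
  apply Finset.sum_congr
  · ext e
    simp only [Finset.mem_filter, SimpleGraph.mem_edgeFinset]
    constructor
    · rintro ⟨he, -, hcr⟩
      exact ⟨he, (cross_map φ Z e).mp hcr⟩
    · rintro ⟨he, hcr⟩
      refine ⟨he, ?_, (cross_map φ Z e).mpr hcr⟩
      obtain ⟨a, b, rfl, ha, hb⟩ := hcr
      have hne : φ a ≠ φ b := fun h => hb (by rw [Set.mem_preimage] at ha ⊢; rwa [← h])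
      exact pushGraph_mem_edgeSet H φ ((SimpleGraph.mem_edgeSet H).mp he) hne
  · intro e _
    rfl

lemma push_reachable {V W : Type*} (H : SimpleGraph V) (φ : V → W) {u v : V}
    (h : H.Reachable u v) : (pushGraph H φ).Reachable (φ u) (φ v) := by
  obtain ⟨w⟩ := h
  induction w with
  | nil => exact SimpleGraph.Reachable.refl _
  | cons hadj _ ih =>
    rename_i a b c _
    by_cases hab : φ a = φ b
    · rwa [hab]
    · exact (SimpleGraph.Adj.reachable (by
        rw [pushGraph_adj]
        exact ⟨hab, a, b, hadj, rfl, rfl⟩)).trans ih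

lemma pushGraph_edge_rep {V W : Type*} (H : SimpleGraph V) (φ : V → W) (E : Sym2 W)
    (hE : E ∈ (pushGraph H φ).edgeSet) :
    ∃ u v, H.Adj u v ∧ φ u ≠ φ v ∧ E = Sym2.map φ s(u, v) := by
  induction E using Sym2.ind with
  | _ a b =>
    rw [SimpleGraph.mem_edgeSet, pushGraph_adj] at hE
    obtain ⟨hne, u, v, h1, rfl, rfl⟩ := hE
    exact ⟨u, v, h1, hne, by rw [Sym2.map_pair_eq]⟩

lemma preimage_image_compl {V W : Type*} (φ : V → W) (R : Set V)
    (h : φ ⁻¹' (φ '' R) = R) : φ ⁻¹' (φ '' Rᶜ) = Rᶜ := by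
  ext v
  constructor
  · rintro ⟨u, hu, huv⟩
    intro hv
    exact hu (h ▸ (⟨v, hv, huv.symm⟩ : φ u ∈ φ '' R))
  · intro hv
    exact ⟨v, hv, rfl⟩

lemma preimage_image_of_respect {V W : Type*} (φ : V → W) (R : Set V)
    (h : ∀ u v, φ u = φ v → (u ∈ R ↔ v ∈ R)) : φ ⁻¹' (φ '' R) = R := by
  ext v
  constructor
  · rintro ⟨u, hu, huv⟩
    exact (h u v huv).mp hu
  · intro hv
    exact ⟨v, hv, rfl⟩

section Constr
variable {r : ℕ} {VH : Type*} [Fintype VH] (H : SimpleGraph VH) (wH : Sym2 VH → ℕ)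
  (x : Fin r ↪ VH)

def xset (A : Finset (Fin r)) : Set VH := ⇑x '' ↑A

def compClosed (A : Finset (Fin r)) : Prop :=
  ∀ i ∈ A, ∀ j, H.Reachable (x j) (x i) → j ∈ A

def compUnion (A : Finset (Fin r)) : Set VH := {v | ∃ i ∈ A, H.Reachable v (x i)}

lemma compUnion_inter (A : Finset (Fin r)) (hA : compClosed H x A) :
    compUnion H x A ∩ Set.range ⇑x = xset x A := by
  ext v
  constructor
  · rintro ⟨⟨i, hi, hre⟩, j, rfl⟩
    exact ⟨j, hA i hi j hre, rfl⟩
  · rintro ⟨i, hi, rfl⟩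
    exact ⟨⟨i, hi, SimpleGraph.Reachable.refl _⟩, i, rfl⟩

lemma cutw_compUnion (A : Finset (Fin r)) : cutw H wH (compUnion H x A) = 0 := by
  rw [cutw, Finset.filter_false_of_mem, Finset.sum_empty]
  rintro e he ⟨a, b, rfl, ⟨i, hi, hre⟩, hb⟩
  rw [SimpleGraph.mem_edgeFinset, SimpleGraph.mem_edgeSet] at he
  exact hb ⟨i, hi, (he.symm.reachable).trans hre⟩

lemma exists_ZA (A : Finset (Fin r)) :
    ∃ Z : Set VH, Z ∩ Set.range ⇑x = xset x A ∧
      ∀ Z' : Set VH, Z' ∩ Set.range ⇑x = xset x A → cutw H wH Z ≤ cutw H wH Z' := by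
  classical
  obtain ⟨Z, hZ, hmin⟩ := Finset.exists_min_image
    ((Finset.univ : Finset (Finset VH)).filter
      fun Z : Finset VH => (↑Z : Set VH) ∩ Set.range ⇑x = xset x A)
    (fun Z : Finset VH => cutw H wH (↑Z : Set VH))
    ⟨A.image x, by
      rw [Finset.mem_filter]
      refine ⟨Finset.mem_univ _, ?_⟩
      rw [Finset.coe_image]
      exact Set.inter_eq_left.mpr (Set.image_subset_range _ _)⟩
  rw [Finset.mem_filter] at hZ
  refine ⟨↑Z, hZ.2, fun Z' hZ' => ?_⟩
  have := hmin Z'.toFinset (by rw [Finset.mem_filter]; exact ⟨Finset.mem_univ _, by rwa [Set.coe_toFinset]⟩)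
  rwa [Set.coe_toFinset] at this

noncomputable def ZA (A : Finset (Fin r)) : Set VH :=
  if compClosed H x A then compUnion H x A else Classical.choose (exists_ZA H wH x A)

lemma ZA_inter (A : Finset (Fin r)) : ZA H wH x A ∩ Set.range ⇑x = xset x A := by
  rw [ZA]
  split_ifs with h
  · exact compUnion_inter H x A h
  · exact (Classical.choose_spec (exists_ZA H wH x A)).1

lemma ZA_min (A : Finset (Fin r)) (Z' : Set VH) (hZ' : Z' ∩ Set.range ⇑x = xset x A) :
    cutw H wH (ZA H wH x A) ≤ cutw H wH Z' := by
  rw [ZA]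
  split_ifs with h
  · rw [cutw_compUnion]
    exact Nat.zero_le _
  · exact (Classical.choose_spec (exists_ZA H wH x A)).2 Z' hZ'

lemma ZA_of_closed (A : Finset (Fin r)) (h : compClosed H x A) :
    ZA H wH x A = compUnion H x A := if_pos h

def CompInt (c : H.ConnectedComponent) : Prop := ∃ v ∈ c.supp, v ∉ Set.range ⇑x

lemma exists_YC (c : H.ConnectedComponent) (h : CompInt H x c) :
    ∃ Y : Set VH, (Y ⊆ c.supp ∧ Y.Nonempty ∧ Y ∩ Set.range ⇑x = ∅) ∧
      ∀ Y' : Set VH, Y' ⊆ c.supp → Y'.Nonempty → Y' ∩ Set.range ⇑x = ∅ →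
        cutw H wH Y ≤ cutw H wH Y' := by
  classical
  obtain ⟨v, hv, hvi⟩ := h
  obtain ⟨Y, hY, hmin⟩ := Finset.exists_min_image
    ((Finset.univ : Finset (Finset VH)).filter
      fun Y : Finset VH => (↑Y : Set VH) ⊆ c.supp ∧ (↑Y : Set VH).Nonempty ∧
        (↑Y : Set VH) ∩ Set.range ⇑x = ∅)
    (fun Y : Finset VH => cutw H wH (↑Y : Set VH))
    ⟨{v}, by
      rw [Finset.mem_filter]
      refine ⟨Finset.mem_univ _, ?_, ?_, ?_⟩
      · simp [hv]
      · simp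
      · simp [Set.singleton_inter_eq_empty.mpr hvi]⟩
  rw [Finset.mem_filter] at hY
  refine ⟨↑Y, hY.2, fun Y' h1 h2 h3 => ?_⟩
  have := hmin Y'.toFinset (by
    rw [Finset.mem_filter, Set.coe_toFinset]
    exact ⟨Finset.mem_univ _, h1, h2, h3⟩)
  rwa [Set.coe_toFinset] at this

noncomputable def YC (c : H.ConnectedComponent) : Set VH :=
  if h : CompInt H x c then Classical.choose (exists_YC H wH x c h) else ∅

lemma YC_subset (c : H.ConnectedComponent) : YC H wH x c ⊆ c.supp := by
  rw [YC]
  split_ifs with h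
  · exact (Classical.choose_spec (exists_YC H wH x c h)).1.1
  · exact Set.empty_subset _

lemma YC_nonempty (c : H.ConnectedComponent) (h : CompInt H x c) : (YC H wH x c).Nonempty := by
  rw [YC, dif_pos h]
  exact (Classical.choose_spec (exists_YC H wH x c h)).1.2.1

lemma YC_int (c : H.ConnectedComponent) : YC H wH x c ∩ Set.range ⇑x = ∅ := by
  rw [YC]
  split_ifs with h
  · exact (Classical.choose_spec (exists_YC H wH x c h)).1.2.2
  · exact Set.empty_inter _

lemma YC_min (c : H.ConnectedComponent) (h : CompInt H x c) (Y' : Set VH)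
    (h1 : Y' ⊆ c.supp) (h2 : Y'.Nonempty) (h3 : Y' ∩ Set.range ⇑x = ∅) :
    cutw H wH (YC H wH x c) ≤ cutw H wH Y' := by
  rw [YC, dif_pos h]
  exact (Classical.choose_spec (exists_YC H wH x c h)).2 Y' h1 h2 h3

noncomputable def Xempty : Set VH :=
  {v | v ∈ YC H wH x (H.connectedComponentMk v)}

lemma Xempty_inter_supp (c : H.ConnectedComponent) :
    Xempty H wH x ∩ c.supp = YC H wH x c := by
  ext v
  constructor
  · rintro ⟨hv, hs⟩
    have hv' : v ∈ YC H wH x (H.connectedComponentMk v) := hv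
    rwa [(SimpleGraph.ConnectedComponent.mem_supp_iff _ _).mp hs] at hv'
  · intro hv
    have hs : v ∈ c.supp := YC_subset H wH x c hv
    refine ⟨?_, hs⟩
    show v ∈ YC H wH x (H.connectedComponentMk v)
    rwa [(SimpleGraph.ConnectedComponent.mem_supp_iff _ _).mp hs]

lemma cutw_inter_supp_le (Z : Set VH) (c : H.ConnectedComponent) :
    cutw H wH (Z ∩ c.supp) ≤ cutw H wH Z := by
  apply Finset.sum_le_sum_of_subset
  intro e he
  rw [Finset.mem_filter] at he ⊢
  obtain ⟨he1, a, b, rfl, ⟨ha, has⟩, hb⟩ := he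
  refine ⟨he1, a, b, rfl, ha, fun hbz => hb ⟨hbz, ?_⟩⟩
  rw [SimpleGraph.mem_edgeFinset, SimpleGraph.mem_edgeSet] at he1
  rw [SimpleGraph.ConnectedComponent.mem_supp_iff _ _] at has
  rw [SimpleGraph.ConnectedComponent.mem_supp_iff _ _]
  rw [← has]
  exact SimpleGraph.ConnectedComponent.sound he1.symm.reachable

end Constr

section Sig
variable {r : ℕ} {VH : Type*} [Fintype VH] (H : SimpleGraph VH) (wH : Sym2 VH → ℕ)
  (x : Fin r ↪ VH)

noncomputable def ZZ (A : Finset (Fin r)) : Set VH :=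
  if A = Finset.univ then Xempty H wH x else ZA H wH x A

lemma ZZ_of_ne (A : Finset (Fin r)) (h : A ≠ Finset.univ) : ZZ H wH x A = ZA H wH x A :=
  if_neg h

noncomputable def sig (v : {v : VH // v ∉ Set.range ⇑x}) :
    {A : Finset (Fin r) // ∃ h : 0 < r, (⟨0, h⟩ : Fin r) ∈ A} → Prop :=
  fun A => v.1 ∈ ZZ H wH x A.1

noncomputable def nC : ℕ := Fintype.card ↥(Set.range (sig H wH x))

noncomputable def eC : ↥(Set.range (sig H wH x)) ≃ Fin (nC H wH x) := Fintype.equivFin _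

noncomputable def xp : Fin r ↪ Fin (r + nC H wH x) :=
  ⟨fun i => Fin.castAdd _ i, fun i j h => by
    apply Fin.ext
    have := congrArg Fin.val h
    simpa using this⟩

noncomputable def phi : VH → Fin (r + nC H wH x) := fun v =>
  if h : v ∈ Set.range ⇑x then xp H wH x h.choose
  else Fin.natAdd r (eC H wH x ⟨sig H wH x ⟨v, h⟩, ⟨v, h⟩, rfl⟩)

lemma phi_x (i : Fin r) : phi H wH x (x i) = xp H wH x i := by
  have h : (x i : VH) ∈ Set.range ⇑x := ⟨i, rfl⟩
  rw [phi, dif_pos h]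
  congr 1
  exact x.injective h.choose_spec

lemma phi_int (v : VH) (h : v ∉ Set.range ⇑x) :
    phi H wH x v = Fin.natAdd r (eC H wH x ⟨sig H wH x ⟨v, h⟩, ⟨v, h⟩, rfl⟩) := dif_neg h

lemma natAdd_ne_xp (j : Fin (nC H wH x)) (i : Fin r) : Fin.natAdd r j ≠ xp H wH x i := by
  intro h
  have := congrArg Fin.val h
  simp only [Fin.coe_natAdd] at this
  have hi : (xp H wH x i : ℕ) = (i : ℕ) := rfl
  rw [hi] at this
  omega

lemma phi_mem_range_iff (v : VH) :
    phi H wH x v ∈ Set.range ⇑(xp H wH x) ↔ v ∈ Set.range ⇑x := by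
  constructor
  · rintro ⟨i, hi⟩
    by_contra h
    rw [phi_int H wH x v h] at hi
    exact natAdd_ne_xp H wH x _ i hi.symm
  · rintro ⟨i, rfl⟩
    exact ⟨i, (phi_x H wH x i).symm⟩

lemma phi_surjective : Function.Surjective (phi H wH x) := by
  intro w
  refine Fin.addCases (fun i => ⟨x i, phi_x H wH x i⟩) (fun j => ?_) w
  obtain ⟨u, hu⟩ := (eC H wH x).symm j |>.2
  refine ⟨u.1, ?_⟩
  rw [phi_int H wH x u.1 u.2]
  have : (⟨sig H wH x ⟨u.1, u.2⟩, ⟨u.1, u.2⟩, rfl⟩ :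
      ↥(Set.range (sig H wH x))) = (eC H wH x).symm j := by
    apply Subtype.ext
    exact hu
  rw [this, Equiv.apply_symm_apply]

lemma phi_int_eq_iff (u v : VH) (hu : u ∉ Set.range ⇑x) (hv : v ∉ Set.range ⇑x) :
    phi H wH x u = phi H wH x v ↔ sig H wH x ⟨u, hu⟩ = sig H wH x ⟨v, hv⟩ := by
  rw [phi_int H wH x u hu, phi_int H wH x v hv]
  constructor
  · intro h
    have h2 : (eC H wH x ⟨sig H wH x ⟨u, hu⟩, ⟨u, hu⟩, rfl⟩ : Fin _)
        = eC H wH x ⟨sig H wH x ⟨v, hv⟩, ⟨v, hv⟩, rfl⟩ := by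
      apply Fin.ext
      have := congrArg Fin.val h
      simp only [Fin.coe_natAdd] at this
      omega
    have := (eC H wH x).injective h2
    exact congrArg Subtype.val this
  · intro h
    congr 1
    apply congrArg
    exact Subtype.ext h

lemma phi_bdry_eq (u v : VH) (hu : u ∈ Set.range ⇑x) (hv : v ∈ Set.range ⇑x)
    (h : phi H wH x u = phi H wH x v) : u = v := by
  obtain ⟨i, rfl⟩ := hu
  obtain ⟨j, rfl⟩ := hv
  rw [phi_x, phi_x] at h
  exact congrArg x ((xp H wH x).injective h)

lemma phi_mixed (u v : VH) (hu : u ∈ Set.range ⇑x) (hv : v ∉ Set.range ⇑x) :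
    phi H wH x u ≠ phi H wH x v := by
  intro h
  rw [← phi_mem_range_iff H wH x, ← h, phi_mem_range_iff H wH x] at hv
  exact hv hu

end Sig

section Comp
variable {r : ℕ} {VH : Type*} [Fintype VH] (H : SimpleGraph VH) (wH : Sym2 VH → ℕ)
  (x : Fin r ↪ VH)

noncomputable def BF (c : H.ConnectedComponent) : Finset (Fin r) :=
  Finset.univ.filter fun i => x i ∈ c.supp

lemma mem_BF (c : H.ConnectedComponent) (i : Fin r) : i ∈ BF H x c ↔ x i ∈ c.supp := by
  rw [BF, Finset.mem_filter]
  simp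

lemma BF_closed (c : H.ConnectedComponent) : compClosed H x (BF H x c) := by
  intro i hi j hre
  rw [mem_BF] at hi ⊢
  rw [SimpleGraph.ConnectedComponent.mem_supp_iff] at hi ⊢
  rw [← hi]
  exact SimpleGraph.ConnectedComponent.sound hre

lemma compClosed_union (A B : Finset (Fin r)) (hA : compClosed H x A)
    (hB : compClosed H x B) : compClosed H x (A ∪ B) := by
  intro i hi j hre
  rw [Finset.mem_union] at hi ⊢
  rcases hi with hi | hi
  · exact Or.inl (hA i hi j hre)
  · exact Or.inr (hB i hi j hre)

lemma BF_nonempty (hx : ProperB H x) (c : H.ConnectedComponent) : (BF H x c).Nonempty := by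
  obtain ⟨v, rfl⟩ := c.exists_rep
  obtain ⟨i, hre⟩ := hx.2 v
  refine ⟨i, ?_⟩
  change i ∈ BF H x (H.connectedComponentMk v)
  rw [mem_BF, SimpleGraph.ConnectedComponent.mem_supp_iff]
  exact SimpleGraph.ConnectedComponent.sound hre.symm

lemma BF_eq_of_mem {c c' : H.ConnectedComponent} {i : Fin r} (h : i ∈ BF H x c)
    (h' : i ∈ BF H x c') : c = c' := by
  rw [mem_BF, SimpleGraph.ConnectedComponent.mem_supp_iff] at h h'
  rw [← h, ← h']

lemma mem_compUnion_iff_BF (v : VH) (A : Finset (Fin r)) :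
    v ∈ compUnion H x A ↔ ∃ i ∈ A, i ∈ BF H x (H.connectedComponentMk v) := by
  constructor
  · rintro ⟨i, hi, hre⟩
    refine ⟨i, hi, ?_⟩
    rw [mem_BF, SimpleGraph.ConnectedComponent.mem_supp_iff]
    exact (SimpleGraph.ConnectedComponent.sound hre).symm
  · rintro ⟨i, hi, hBF⟩
    rw [mem_BF, SimpleGraph.ConnectedComponent.mem_supp_iff] at hBF
    exact ⟨i, hi, (SimpleGraph.ConnectedComponent.exact hBF).symm⟩

lemma sig_comp_eq (hx : ProperB H x) (u v : {v : VH // v ∉ Set.range ⇑x})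
    (hs : sig H wH x u = sig H wH x v) :
    H.connectedComponentMk u.1 = H.connectedComponentMk v.1 := by
  by_contra hne
  obtain ⟨iw, _⟩ := hx.2 u.1
  have hr : 0 < r := iw.pos
  set i0 : Fin r := ⟨0, hr⟩
  set cu := H.connectedComponentMk u.1 with hcu
  set cv := H.connectedComponentMk v.1 with hcv
  have key : ∃ A : Finset (Fin r), (⟨0, hr⟩ : Fin r) ∈ A ∧ A ≠ Finset.univ ∧
      compClosed H x A ∧
      ((u.1 ∈ compUnion H x A ∧ v.1 ∉ compUnion H x A) ∨
       (v.1 ∈ compUnion H x A ∧ u.1 ∉ compUnion H x A)) := by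
    obtain ⟨ju, hju⟩ := BF_nonempty H x hx cu
    obtain ⟨jv, hjv⟩ := BF_nonempty H x hx cv
    have huself : u.1 ∈ compUnion H x (BF H x cu) :=
      (mem_compUnion_iff_BF H x u.1 _).mpr ⟨ju, hju, by rwa [← hcu]⟩
    have hvself : v.1 ∈ compUnion H x (BF H x cv) :=
      (mem_compUnion_iff_BF H x v.1 _).mpr ⟨jv, hjv, by rwa [← hcv]⟩
    by_cases h1 : i0 ∈ BF H x cu
    · refine ⟨BF H x cu, h1, ?_, BF_closed H x cu, Or.inl ⟨huself, ?_⟩⟩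
      · intro heq
        exact hne (BF_eq_of_mem H x (heq ▸ Finset.mem_univ jv : jv ∈ BF H x cu) hjv)
      · intro hmem
        obtain ⟨i, hiA, hiBF⟩ := (mem_compUnion_iff_BF H x v.1 _).mp hmem
        exact hne (BF_eq_of_mem H x hiA (by rwa [← hcv] at hiBF))
    · by_cases h2 : i0 ∈ BF H x cv
      · refine ⟨BF H x cv, h2, ?_, BF_closed H x cv, Or.inr ⟨hvself, ?_⟩⟩
        · intro heq
          exact hne (BF_eq_of_mem H x hju (heq ▸ Finset.mem_univ ju : ju ∈ BF H x cv))
        · intro hmem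
          obtain ⟨i, hiA, hiBF⟩ := (mem_compUnion_iff_BF H x u.1 _).mp hmem
          exact hne (BF_eq_of_mem H x (by rwa [← hcu] at hiBF) hiA)
      · set c0 := H.connectedComponentMk (x i0) with hc0
        have h00 : i0 ∈ BF H x c0 := by
          rw [mem_BF, SimpleGraph.ConnectedComponent.mem_supp_iff]
        refine ⟨BF H x cu ∪ BF H x c0, Finset.mem_union_right _ h00, ?_,
          compClosed_union H x _ _ (BF_closed H x cu) (BF_closed H x c0),
          Or.inl ⟨?_, ?_⟩⟩
        · intro heq
          have : jv ∈ BF H x cu ∪ BF H x c0 := heq ▸ Finset.mem_univ jv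
          rw [Finset.mem_union] at this
          rcases this with h | h
          · exact hne (BF_eq_of_mem H x h hjv)
          · have hcc : c0 = cv := BF_eq_of_mem H x h hjv
            exact h2 (hcc ▸ h00)
        · obtain ⟨i, hiA, hiBF⟩ := (mem_compUnion_iff_BF H x u.1 _).mp huself
          exact (mem_compUnion_iff_BF H x u.1 _).mpr ⟨i, Finset.mem_union_left _ hiA, hiBF⟩
        · intro hmem
          obtain ⟨i, hiA, hiBF⟩ := (mem_compUnion_iff_BF H x v.1 _).mp hmem
          rw [Finset.mem_union] at hiA
          rcases hiA with h | h
          · exact hne (BF_eq_of_mem H x h (by rwa [← hcv] at hiBF))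
          · have hcc : c0 = cv := BF_eq_of_mem H x h (by rwa [← hcv] at hiBF)
            exact h2 (hcc ▸ h00)
  obtain ⟨A, h0A, hAu, hAc, hside⟩ := key
  have hbit := congrFun hs ⟨A, hr, h0A⟩
  have hZZ : ZZ H wH x A = compUnion H x A := by
    rw [ZZ_of_ne H wH x A hAu, ZA_of_closed H wH x A hAc]
  have hbit' : (u.1 ∈ compUnion H x A) = (v.1 ∈ compUnion H x A) := by
    rw [← hZZ]
    exact hbit
  rcases hside with ⟨h1, h2⟩ | ⟨h1, h2⟩
  · exact h2 (hbit' ▸ h1)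
  · exact h2 (hbit'.symm ▸ h1)

end Comp

section Respect
variable {r : ℕ} {VH : Type*} [Fintype VH] (H : SimpleGraph VH) (wH : Sym2 VH → ℕ)
  (x : Fin r ↪ VH)

lemma phi_respect_ZZ (A : Finset (Fin r)) (h0 : ∃ h : 0 < r, (⟨0, h⟩ : Fin r) ∈ A)
    (u v : VH) (h : phi H wH x u = phi H wH x v) : u ∈ ZZ H wH x A ↔ v ∈ ZZ H wH x A := by
  by_cases hu : u ∈ Set.range ⇑x <;> by_cases hv : v ∈ Set.range ⇑x
  · rw [phi_bdry_eq H wH x u v hu hv h]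
  · exact absurd h (phi_mixed H wH x u v hu hv)
  · exact absurd h.symm (phi_mixed H wH x v u hv hu)
  · have hs := (phi_int_eq_iff H wH x u v hu hv).mp h
    have := congrFun hs ⟨A, h0⟩
    exact this.to_iff

lemma phi_respect_supp (hx : ProperB H x) (c : H.ConnectedComponent)
    (u v : VH) (h : phi H wH x u = phi H wH x v) : u ∈ c.supp ↔ v ∈ c.supp := by
  by_cases hu : u ∈ Set.range ⇑x <;> by_cases hv : v ∈ Set.range ⇑x
  · rw [phi_bdry_eq H wH x u v hu hv h]
  · exact absurd h (phi_mixed H wH x u v hu hv)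
  · exact absurd h.symm (phi_mixed H wH x v u hv hu)
  · have hs := (phi_int_eq_iff H wH x u v hu hv).mp h
    have hcomp := sig_comp_eq H wH x hx ⟨u, hu⟩ ⟨v, hv⟩ hs
    rw [SimpleGraph.ConnectedComponent.mem_supp_iff,
      SimpleGraph.ConnectedComponent.mem_supp_iff]
    rw [hcomp]

lemma phi_respect_YC (hx : ProperB H x) (c : H.ConnectedComponent)
    (u v : VH) (h : phi H wH x u = phi H wH x v) :
    u ∈ YC H wH x c ↔ v ∈ YC H wH x c := by
  by_cases hu : u ∈ Set.range ⇑x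
  · rw [phi_bdry_eq H wH x u v hu (by
      rw [← phi_mem_range_iff H wH x, ← h, phi_mem_range_iff H wH x]; exact hu) h]
  · have hv : v ∉ Set.range ⇑x := by
      rwa [← phi_mem_range_iff H wH x, ← h, phi_mem_range_iff H wH x]
    obtain ⟨iw, _⟩ := hx.2 u
    have hr : 0 < r := iw.pos
    have hXe : ∀ w : VH, w ∈ Xempty H wH x ↔ w ∈ ZZ H wH x Finset.univ := by
      intro w
      rw [ZZ, if_pos rfl]
    rw [← Xempty_inter_supp H wH x c, Set.mem_inter_iff, Set.mem_inter_iff,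
      hXe u, hXe v]
    rw [phi_respect_ZZ H wH x Finset.univ ⟨hr, Finset.mem_univ _⟩ u v h,
      phi_respect_supp H wH x hx c u v h]

lemma cutw_empty : cutw H wH (∅ : Set VH) = 0 := by
  rw [cutw, Finset.filter_false_of_mem, Finset.sum_empty]
  rintro e _ ⟨a, b, rfl, ha, _⟩
  exact ha

lemma cutw_univ : cutw H wH (Set.univ : Set VH) = 0 := by
  rw [cutw, Finset.filter_false_of_mem, Finset.sum_empty]
  rintro e _ ⟨a, b, rfl, _, hb⟩
  exact hb (Set.mem_univ b)

lemma purify (hx : ProperB H x) (Z : Set VH) :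
    ∃ Wset : Set VH,
      (∀ i : Fin r, x i ∈ Wset ↔ x i ∈ Z) ∧
      cutw H wH Wset ≤ cutw H wH Z ∧
      phi H wH x ⁻¹' (phi H wH x '' Wset) = Wset ∧
      (Z ∩ Set.range ⇑x = ∅ → (Z \ Set.range ⇑x).Nonempty →
        (Wset \ Set.range ⇑x).Nonempty) ∧
      (Set.range ⇑x ⊆ Z → (∃ v, v ∉ Z ∧ v ∉ Set.range ⇑x) →
        ∃ v, v ∉ Wset ∧ v ∉ Set.range ⇑x) := by
  classical
  set A : Finset (Fin r) := Finset.univ.filter (fun i => x i ∈ Z) with hA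
  have hmemA : ∀ i, i ∈ A ↔ x i ∈ Z := by
    intro i
    rw [hA, Finset.mem_filter]
    simp
  have hZA : Z ∩ Set.range ⇑x = xset x A := by
    ext v
    constructor
    · rintro ⟨hz, i, rfl⟩
      exact ⟨i, (hmemA i).mpr hz, rfl⟩
    · rintro ⟨i, hi, rfl⟩
      exact ⟨(hmemA i).mp hi, i, rfl⟩
  have hmemxset : ∀ i, x i ∈ xset x A ↔ i ∈ A := by
    intro i
    constructor
    · rintro ⟨j, hj, hji⟩
      rwa [← x.injective hji]
    · intro hi
      exact ⟨i, hi, rfl⟩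
  by_cases hA0 : A = ∅
  · have hZx : Z ∩ Set.range ⇑x = ∅ := by
      rw [hZA, hA0]
      simp [xset]
    by_cases hZi : (Z \ Set.range ⇑x).Nonempty
    · obtain ⟨v₀, hv₀Z, hv₀i⟩ := hZi
      set c₀ := H.connectedComponentMk v₀ with hc₀
      have hv₀s : v₀ ∈ c₀.supp := by
        rw [SimpleGraph.ConnectedComponent.mem_supp_iff]
      have hCI : CompInt H x c₀ := ⟨v₀, hv₀s, hv₀i⟩
      refine ⟨YC H wH x c₀, ?_, ?_, ?_, ?_, ?_⟩
      · intro i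
        constructor
        · intro hmem
          exact absurd (Set.eq_empty_iff_forall_notMem.mp (YC_int H wH x c₀)
            (x i) ⟨hmem, i, rfl⟩) not_false
        · intro hmem
          exact absurd (Set.eq_empty_iff_forall_notMem.mp hZx (x i) ⟨hmem, i, rfl⟩)
            not_false
      · refine le_trans (YC_min H wH x c₀ hCI (Z ∩ c₀.supp) Set.inter_subset_right
          ⟨v₀, hv₀Z, hv₀s⟩ ?_) (cutw_inter_supp_le H wH Z c₀)
        rw [Set.eq_empty_iff_forall_notMem]
        rintro v ⟨⟨hvZ, -⟩, hvr⟩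
        exact Set.eq_empty_iff_forall_notMem.mp hZx v ⟨hvZ, hvr⟩
      · exact preimage_image_of_respect _ _ (phi_respect_YC H wH x hx c₀)
      · intro _ _
        obtain ⟨w, hw⟩ := YC_nonempty H wH x c₀ hCI
        refine ⟨w, hw, fun hr => ?_⟩
        exact Set.eq_empty_iff_forall_notMem.mp (YC_int H wH x c₀) w ⟨hw, hr⟩
      · intro hsub hex
        obtain ⟨i, -⟩ := hx.2 v₀
        exact absurd (Set.eq_empty_iff_forall_notMem.mp hZx (x i)
          ⟨hsub ⟨i, rfl⟩, i, rfl⟩) not_false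
    · refine ⟨∅, ?_, ?_, ?_, ?_, ?_⟩
      · intro i
        simp only [Set.mem_empty_iff_false, false_iff]
        intro hmem
        exact Set.eq_empty_iff_forall_notMem.mp hZx (x i) ⟨hmem, i, rfl⟩
      · rw [cutw_empty]
        exact Nat.zero_le _
      · simp
      · intro _ h2
        exact absurd h2 hZi
      · rintro _ ⟨v, hv1, hv2⟩
        exact ⟨v, Set.notMem_empty v, hv2⟩
  · obtain ⟨ia, hia⟩ := Finset.nonempty_iff_ne_empty.mpr hA0
    have hr : 0 < r := ia.pos
    set i0 : Fin r := ⟨0, hr⟩ with hi0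
    have hb4 : ¬ (Z ∩ Set.range ⇑x = ∅) := by
      intro hcon
      exact Set.eq_empty_iff_forall_notMem.mp hcon (x ia) ⟨(hmemA ia).mp hia, ia, rfl⟩
    by_cases hAu : A = Finset.univ
    · have hsubZ : Set.range ⇑x ⊆ Z := by
        rintro - ⟨i, rfl⟩
        exact (hmemA i).mp (hAu ▸ Finset.mem_univ i)
      by_cases hZc : ∃ v, v ∉ Z ∧ v ∉ Set.range ⇑x
      · obtain ⟨v₁, hv₁Z, hv₁i⟩ := hZc
        set c₁ := H.connectedComponentMk v₁ with hc₁
        have hv₁s : v₁ ∈ c₁.supp := by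
          rw [SimpleGraph.ConnectedComponent.mem_supp_iff]
        have hCI : CompInt H x c₁ := ⟨v₁, hv₁s, hv₁i⟩
        refine ⟨(YC H wH x c₁)ᶜ, ?_, ?_, ?_, ?_, ?_⟩
        · intro i
          constructor
          · intro _
            exact hsubZ ⟨i, rfl⟩
          · intro _ hmem
            exact Set.eq_empty_iff_forall_notMem.mp (YC_int H wH x c₁) (x i)
              ⟨hmem, i, rfl⟩
        · rw [cutw_compl]
          refine le_trans (YC_min H wH x c₁ hCI (Zᶜ ∩ c₁.supp) Set.inter_subset_right
            ⟨v₁, hv₁Z, hv₁s⟩ ?_) ?_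
          · rw [Set.eq_empty_iff_forall_notMem]
            rintro v ⟨⟨hvZ, -⟩, hvr⟩
            exact hvZ (hsubZ hvr)
          · calc cutw H wH (Zᶜ ∩ c₁.supp) ≤ cutw H wH Zᶜ := cutw_inter_supp_le H wH Zᶜ c₁
              _ = cutw H wH Z := cutw_compl H wH Z
        · exact preimage_image_compl _ _
            (preimage_image_of_respect _ _ (phi_respect_YC H wH x hx c₁))
        · intro hcon _
          exact absurd hcon hb4
        · intro _ _
          obtain ⟨w, hw⟩ := YC_nonempty H wH x c₁ hCI
          refine ⟨w, not_not_intro hw, fun hrr => ?_⟩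
          exact Set.eq_empty_iff_forall_notMem.mp (YC_int H wH x c₁) w ⟨hw, hrr⟩
      · refine ⟨Set.univ, ?_, ?_, ?_, ?_, ?_⟩
        · intro i
          simp only [Set.mem_univ, true_iff]
          exact hsubZ ⟨i, rfl⟩
        · rw [cutw_univ]
          exact Nat.zero_le _
        · exact preimage_image_of_respect _ _ (fun u v _ => by simp)
        · intro hcon _
          exact absurd hcon hb4
        · intro _ h2
          exact absurd h2 hZc
    · have hb5 : ¬ (Set.range ⇑x ⊆ Z) := by
        intro hcon
        apply hAu
        apply Finset.eq_univ_of_forall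
        intro i
        exact (hmemA i).mpr (hcon ⟨i, rfl⟩)
      by_cases h0 : i0 ∈ A
      · refine ⟨ZA H wH x A, ?_, ZA_min H wH x A Z hZA, ?_, ?_, ?_⟩
        · intro i
          rw [← hmemA i, ← hmemxset i]
          constructor
          · intro hmem
            rw [← ZA_inter H wH x A]
            exact ⟨hmem, i, rfl⟩
          · intro hmem
            rw [← ZA_inter H wH x A] at hmem
            exact hmem.1
        · rw [← ZZ_of_ne H wH x A hAu]
          exact preimage_image_of_respect _ _ (phi_respect_ZZ H wH x A ⟨hr, h0⟩)
        · intro hcon _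
          exact absurd hcon hb4
        · intro hcon _
          exact absurd hcon hb5
      · have h0c : i0 ∈ Aᶜ := Finset.mem_compl.mpr h0
        have hAcu : Aᶜ ≠ Finset.univ := by
          intro hcon
          have : ia ∈ Aᶜ := hcon ▸ Finset.mem_univ ia
          exact Finset.mem_compl.mp this hia
        have hZcA : Zᶜ ∩ Set.range ⇑x = xset x Aᶜ := by
          ext v
          constructor
          · rintro ⟨hz, i, rfl⟩
            refine ⟨i, Finset.mem_compl.mpr fun hmem => hz ((hmemA i).mp hmem), rfl⟩
          · rintro ⟨i, hi, rfl⟩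
            exact ⟨fun hmem => Finset.mem_compl.mp hi ((hmemA i).mpr hmem), i, rfl⟩
        refine ⟨(ZA H wH x Aᶜ)ᶜ, ?_, ?_, ?_, ?_, ?_⟩
        · intro i
          rw [← hmemA i]
          constructor
          · intro hmem
            by_contra hiA
            have : x i ∈ xset x Aᶜ := ⟨i, Finset.mem_compl.mpr hiA, rfl⟩
            rw [← ZA_inter H wH x Aᶜ] at this
            exact hmem this.1
          · intro hmem hmem2
            have : x i ∈ xset x Aᶜ := by
              rw [← ZA_inter H wH x Aᶜ]
              exact ⟨hmem2, i, rfl⟩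
            obtain ⟨j, hj, hji⟩ := this
            rw [← x.injective hji] at hmem
            exact Finset.mem_compl.mp hj hmem
        · calc cutw H wH (ZA H wH x Aᶜ)ᶜ = cutw H wH (ZA H wH x Aᶜ) := cutw_compl H wH _
            _ ≤ cutw H wH Zᶜ := ZA_min H wH x Aᶜ Zᶜ hZcA
            _ = cutw H wH Z := cutw_compl H wH Z
        · refine preimage_image_compl _ _ ?_
          rw [← ZZ_of_ne H wH x Aᶜ hAcu]
          exact preimage_image_of_respect _ _ (phi_respect_ZZ H wH x Aᶜ ⟨hr, h0c⟩)
        · intro hcon _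
          exact absurd hcon hb4
        · intro hcon _
          exact absurd hcon hb5

end Respect

lemma exists_le_of_sInf_le {s : Set ℕ∞} {p : ℕ} (h : sInf s ≤ (p : ℕ∞)) :
    ∃ c ∈ s, c ≤ (p : ℕ∞) := by
  by_contra hcon
  push_neg at hcon
  have h1 : (p : ℕ∞) + 1 ≤ sInf s :=
    le_sInf fun c hc => Order.add_one_le_of_lt (hcon c hc)
  have h2 : (p : ℕ∞) + 1 ≤ (p : ℕ∞) := le_trans h1 h
  have h3 : ((p + 1 : ℕ) : ℕ∞) ≤ ((p : ℕ) : ℕ∞) := by push_cast; exact h2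
  rw [Nat.cast_le] at h3
  omega

section Extract
variable {r : ℕ} {VH : Type*} [Fintype VH] (H : SimpleGraph VH) (wH : Sym2 VH → ℕ)
  (x : Fin r ↪ VH)

lemma cutw_YC_le (hx : ProperB H x) {p : ℕ} (hreach : BdryReach H wH x p)
    (c : H.ConnectedComponent) (h : CompInt H x c) :
    (cutw H wH (YC H wH x c) : ℕ∞) ≤ (p : ℕ∞) := by
  obtain ⟨v, hvs, hvi, hsep⟩ := hreach c h
  obtain ⟨k, ⟨S, hS1, hS2, hS3⟩, hk⟩ := exists_le_of_sInf_le hsep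
  set Y : Set VH := {u | (H.deleteEdges ↑S).Reachable v u} with hYdef
  have hvY : v ∈ Y := SimpleGraph.Reachable.refl v
  have hYc : Y ⊆ c.supp := by
    intro u hu
    have hvu : H.Reachable v u :=
      SimpleGraph.Reachable.mono (SimpleGraph.deleteEdges_le _) hu
    rw [SimpleGraph.ConnectedComponent.mem_supp_iff]
    rw [← (SimpleGraph.ConnectedComponent.mem_supp_iff _ _).mp hvs]
    exact SimpleGraph.ConnectedComponent.sound hvu.symm
  have hYi : Y ∩ Set.range ⇑x = ∅ := by
    rw [Set.eq_empty_iff_forall_notMem]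
    rintro u ⟨hu, i, rfl⟩
    refine hS3 (x i) ⟨⟨i, rfl⟩, hYc hu⟩ v rfl ?_
    exact hu.symm
  have hcut : cutw H wH Y ≤ ∑ e ∈ S, wH e :=
    Finset.sum_le_sum_of_subset (crossFinset_subset_of_not_reachable H S v)
  have hmin : cutw H wH (YC H wH x c) ≤ cutw H wH Y :=
    YC_min H wH x c h Y hYc ⟨v, hvY⟩ hYi
  calc (cutw H wH (YC H wH x c) : ℕ∞) ≤ (cutw H wH Y : ℕ∞) := Nat.cast_le.mpr hmin
    _ ≤ ((∑ e ∈ S, wH e : ℕ) : ℕ∞) := Nat.cast_le.mpr hcut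
    _ = ∑ e ∈ S, (wH e : ℕ∞) := Nat.cast_sum _ _
    _ = k := hS2
    _ ≤ (p : ℕ∞) := hk

lemma push_no_bdry_adj (hx : ProperB H x) (i j : Fin r) :
    ¬ (pushGraph H (phi H wH x)).Adj (xp H wH x i) (xp H wH x j) := by
  intro hadj
  rw [pushGraph_adj] at hadj
  obtain ⟨-, u, v, hadj, hu, hv⟩ := hadj
  have hur : u ∈ Set.range ⇑x := by
    rw [← phi_mem_range_iff H wH x, hu]
    exact ⟨i, rfl⟩
  have hvr : v ∈ Set.range ⇑x := by
    rw [← phi_mem_range_iff H wH x, hv]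
    exact ⟨j, rfl⟩
  obtain ⟨i', rfl⟩ := hur
  obtain ⟨j', rfl⟩ := hvr
  exact hx.1 i' j' hadj

lemma properB_push (hx : ProperB H x) :
    ProperB (pushGraph H (phi H wH x)) (xp H wH x) := by
  constructor
  · exact push_no_bdry_adj H wH x hx
  · intro w
    obtain ⟨u, rfl⟩ := phi_surjective H wH x w
    obtain ⟨i, hre⟩ := hx.2 u
    refine ⟨i, ?_⟩
    rw [← phi_x H wH x i]
    exact push_reachable H (phi H wH x) hre

lemma pushW_pos (hwH : ∀ e ∈ H.edgeSet, 0 < wH e) :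
    ∀ E ∈ (pushGraph H (phi H wH x)).edgeSet, 0 < pushW H wH (phi H wH x) E := by
  intro E hE
  obtain ⟨u, v, hadj, hne, rfl⟩ := pushGraph_edge_rep H (phi H wH x) E hE
  calc 0 < wH s(u, v) := hwH _ ((SimpleGraph.mem_edgeSet H).mpr hadj)
    _ ≤ pushW H wH (phi H wH x) (Sym2.map (phi H wH x) s(u, v)) :=
        Finset.single_le_sum (fun i _ => Nat.zero_le _) (by
          simp only [Finset.mem_filter, SimpleGraph.mem_edgeFinset]
          exact ⟨(SimpleGraph.mem_edgeSet H).mpr hadj, trivial⟩)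

lemma bdryReach_push (hx : ProperB H x) {p : ℕ} (hreach : BdryReach H wH x p) :
    BdryReach (pushGraph H (phi H wH x)) (pushW H wH (phi H wH x)) (xp H wH x) p := by
  intro c' hc'
  obtain ⟨j₀, hj₀s, hj₀i⟩ := hc'
  obtain ⟨u₀, rfl⟩ := phi_surjective H wH x j₀
  have hu₀i : u₀ ∉ Set.range ⇑x := by
    rwa [← phi_mem_range_iff H wH x]
  set c₀ := H.connectedComponentMk u₀ with hc₀
  have hCI : CompInt H x c₀ :=
    ⟨u₀, by rw [SimpleGraph.ConnectedComponent.mem_supp_iff], hu₀i⟩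
  obtain ⟨v₀, hv₀⟩ := YC_nonempty H wH x c₀ hCI
  have hv₀i : v₀ ∉ Set.range ⇑x := fun hr =>
    Set.eq_empty_iff_forall_notMem.mp (YC_int H wH x c₀) v₀ ⟨hv₀, hr⟩
  have hre : H.Reachable v₀ u₀ := by
    have := (SimpleGraph.ConnectedComponent.mem_supp_iff _ _).mp (YC_subset H wH x c₀ hv₀)
    exact SimpleGraph.ConnectedComponent.exact this
  have hre' := push_reachable H (phi H wH x) hre
  refine ⟨phi H wH x v₀, ?_, ?_, ?_⟩
  · rw [SimpleGraph.ConnectedComponent.mem_supp_iff]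
    rw [← (SimpleGraph.ConnectedComponent.mem_supp_iff _ _).mp hj₀s]
    exact SimpleGraph.ConnectedComponent.sound hre'
  · rwa [phi_mem_range_iff H wH x]
  · set G' := pushGraph H (phi H wH x)
    set XY : Set (Fin (r + nC H wH x)) := phi H wH x '' YC H wH x c₀ with hXY
    set S' : Finset (Sym2 (Fin (r + nC H wH x))) :=
      G'.edgeFinset.filter (fun e => cross XY e) with hS'
    have hsub : ↑S' ⊆ G'.edgeSet := by
      intro e he
      rw [Finset.mem_coe, hS', Finset.mem_filter] at he
      exact SimpleGraph.mem_edgeFinset.mp he.1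
    refine le_trans (sInf_le ⟨S', hsub, rfl, ?_⟩) ?_
    · rintro a ⟨⟨i, rfl⟩, has⟩ b rfl hre2
      have hbX : phi H wH x v₀ ∈ XY := ⟨v₀, hv₀, rfl⟩
      have haX : xp H wH x i ∉ XY := by
        rintro ⟨z, hz, hzeq⟩
        have hzint : z ∉ Set.range ⇑x := fun hr =>
          Set.eq_empty_iff_forall_notMem.mp (YC_int H wH x c₀) z ⟨hz, hr⟩
        have : phi H wH x z ∈ Set.range ⇑(xp H wH x) := ⟨i, hzeq.symm⟩
        rw [phi_mem_range_iff H wH x] at this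
        exact hzint this
      refine not_reachable_delete G' (↑S') XY ?_ hbX haX hre2.symm
      intro u v huv hu hv
      rw [Finset.mem_coe, hS', Finset.mem_filter]
      exact ⟨SimpleGraph.mem_edgeFinset.mpr ((SimpleGraph.mem_edgeSet G').mpr huv),
        u, v, rfl, hu, hv⟩
    · have : (∑ e ∈ S', (pushW H wH (phi H wH x) e : ℕ∞))
          = (cutw G' (pushW H wH (phi H wH x)) XY : ℕ∞) := by
        rw [cutw, Nat.cast_sum]
      rw [this]
      have hq : cutw G' (pushW H wH (phi H wH x)) XY = cutw H wH (YC H wH x c₀) := by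
        rw [cutw_pushGraph, preimage_image_of_respect _ _ (phi_respect_YC H wH x hx c₀)]
      rw [hq]
      exact cutw_YC_le H wH x hx hreach c₀ hCI

end Extract

lemma nC_le {r : ℕ} {VH : Type*} [Fintype VH] (H : SimpleGraph VH) (wH : Sym2 VH → ℕ)
    (x : Fin r ↪ VH) : nC H wH x ≤ 2 ^ 2 ^ (r - 1) := by
  classical
  have h1 : nC H wH x ≤ Fintype.card
      ({A : Finset (Fin r) // ∃ h : 0 < r, (⟨0, h⟩ : Fin r) ∈ A} → Prop) := by
    rw [nC]
    exact Fintype.card_le_of_injective _ Subtype.val_injective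
  have h2 : Fintype.card
      ({A : Finset (Fin r) // ∃ h : 0 < r, (⟨0, h⟩ : Fin r) ∈ A} → Prop)
      = 2 ^ Fintype.card {A : Finset (Fin r) // ∃ h : 0 < r, (⟨0, h⟩ : Fin r) ∈ A} := by
    rw [Fintype.card_fun, Fintype.card_prop]
  rcases Nat.eq_zero_or_pos r with hr | hr
  · subst hr
    haveI : IsEmpty {A : Finset (Fin 0) // ∃ h : 0 < 0, (⟨0, h⟩ : Fin 0) ∈ A} := by
      refine ⟨fun A => ?_⟩
      obtain ⟨h, -⟩ := A.2
      omega
    rw [h2, Fintype.card_eq_zero] at h1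
    calc nC H wH x ≤ 2 ^ 0 := h1
      _ ≤ 2 ^ 2 ^ (0 - 1) := by norm_num
  · have h3 : Fintype.card {A : Finset (Fin r) // ∃ h : 0 < r, (⟨0, h⟩ : Fin r) ∈ A}
        ≤ 2 ^ (r - 1) := by
      set i0 : Fin r := ⟨0, hr⟩ with hi0
      have hinj : Function.Injective
          (fun A : {A : Finset (Fin r) // ∃ h : 0 < r, (⟨0, h⟩ : Fin r) ∈ A} =>
            (A.1.erase i0).subtype (fun i => i ≠ i0)) := by
        intro A B hAB
        apply Subtype.ext
        ext j
        by_cases hj : j = i0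
        · subst hj
          obtain ⟨hA, hA0⟩ := A.2
          obtain ⟨hB, hB0⟩ := B.2
          simp only [hi0]
          constructor <;> intro <;> assumption
        · have hmem : ∀ C : Finset (Fin r), j ∈ C ↔
              (⟨j, hj⟩ : {i : Fin r // i ≠ i0}) ∈ (C.erase i0).subtype (fun i => i ≠ i0) := by
            intro C
            rw [Finset.mem_subtype, Finset.mem_erase]
            simp [hj]
          have hAB2 : (A.1.erase i0).subtype (fun i => i ≠ i0)
              = (B.1.erase i0).subtype (fun i => i ≠ i0) := hAB
          rw [hmem A.1, hmem B.1, hAB2]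
      calc Fintype.card {A : Finset (Fin r) // ∃ h : 0 < r, (⟨0, h⟩ : Fin r) ∈ A}
          ≤ Fintype.card (Finset {i : Fin r // i ≠ i0}) :=
            Fintype.card_le_of_injective _ hinj
        _ = 2 ^ Fintype.card {i : Fin r // i ≠ i0} := Fintype.card_finset
        _ = 2 ^ (r - 1) := by
            congr 1
            have : Fintype.card {i : Fin r // ¬ i = i0} = r - 1 := by
              rw [Fintype.card_subtype_compl, Fintype.card_subtype_eq, Fintype.card_fin]
            simpa using this
    calc nC H wH x ≤ 2 ^ Fintype.card {A : Finset (Fin r) // ∃ h : 0 < r, (⟨0, h⟩ : Fin r) ∈ A} := h2 ▸ h1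
      _ ≤ 2 ^ 2 ^ (r - 1) := Nat.pow_le_pow_right (by norm_num) h3

lemma iInf_cut_le {V : Type*} [Fintype V] (G : SimpleGraph V) (w : Sym2 V → ℕ)
    (X : Set V) (h1 : X.Nonempty) (h2 : Xᶜ.Nonempty) :
    (⨅ (Y : Set V) (_ : Y.Nonempty) (_ : Yᶜ.Nonempty), (cutw G w Y : ℕ∞))
      ≤ (cutw G w X : ℕ∞) := by
  refine le_trans (iInf_le _ X) ?_
  refine le_trans (iInf_le _ h1) ?_
  exact iInf_le _ h2

set_option maxHeartbeats 2000000 in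
lemma weightConn_push_eq {r : ℕ} {VH : Type*} [Fintype VH] (H : SimpleGraph VH)
    (wH : Sym2 VH → ℕ) (x : Fin r ↪ VH) (hx : ProperB H x)
    {VF : Type*} [Fintype VF] [Nonempty VF] (F : SimpleGraph VF) (wF : Sym2 VF → ℕ)
    (y : Fin r ↪ VF) :
    weightConn (BSum F ⇑y (pushGraph H (phi H wH x)) ⇑(xp H wH x))
        (BSumW wF (pushW H wH (phi H wH x)) ⇑y ⇑(xp H wH x))
      = weightConn (BSum F ⇑y H ⇑x) (BSumW wF wH ⇑y ⇑x) := by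
  set φ := phi H wH x with hφ
  set H' := pushGraph H φ with hH'
  set w' := pushW H wH φ with hw'
  set xP := xp H wH x with hxP
  have hbb : ∀ i j, ¬ H.Adj (x i) (x j) := hx.1
  have hbb' : ∀ i j, ¬ H'.Adj (xP i) (xP j) := push_no_bdry_adj H wH x hx
  haveI : Nonempty (VF ⊕ {v : VH // v ∉ Set.range ⇑x}) :=
    ⟨Sum.inl (Classical.arbitrary VF)⟩
  haveI : Nonempty (VF ⊕ {j : Fin (r + nC H wH x) // j ∉ Set.range ⇑xP}) :=
    ⟨Sum.inl (Classical.arbitrary VF)⟩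
  rw [weightConn_eq_iInf, weightConn_eq_iInf]
  apply le_antisymm
  · refine le_iInf fun X => le_iInf fun hX1 => le_iInf fun hX2 => ?_
    set Z := mu ⇑y x ⁻¹' X with hZ
    obtain ⟨Wset, hb1, hb2, hb3, hb4, hb5⟩ := purify H wH x hx Z
    set XR : Set {j : Fin (r + nC H wH x) // j ∉ Set.range ⇑xP} :=
      {b | b.1 ∈ φ '' Wset} with hXR
    set X' : Set (VF ⊕ {j : Fin (r + nC H wH x) // j ∉ Set.range ⇑xP}) :=
      Sum.inl '' (Sum.inl ⁻¹' X) ∪ Sum.inr '' XR with hX'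
    have hinlX' : ∀ a : VF, (Sum.inl a ∈ X' ↔ Sum.inl a ∈ X) := by
      intro a
      constructor
      · rintro (⟨a', ha', heq⟩ | ⟨b, -, heq⟩)
        · rwa [← Sum.inl_injective heq]
        · exact absurd heq (by simp)
      · intro ha
        exact Or.inl ⟨a, ha, rfl⟩
    have hinrX' : ∀ b, (Sum.inr b ∈ X' ↔ b ∈ XR) := by
      intro b
      constructor
      · rintro (⟨a', -, heq⟩ | ⟨b', hb', heq⟩)
        · exact absurd heq (by simp)
        · rwa [← Sum.inr_injective heq]
      · intro hb
        exact Or.inr ⟨b, hb, rfl⟩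
    have hf1 : Sum.inl ⁻¹' X' = Sum.inl ⁻¹' X := by
      ext a
      exact hinlX' a
    have hmuX : ∀ i : Fin r, (x i ∈ Z ↔ Sum.inl (y i) ∈ X) := by
      intro i
      rw [hZ, Set.mem_preimage, mu_x]
    have hf2 : φ ⁻¹' (mu ⇑y xP ⁻¹' X') = Wset := by
      ext v
      by_cases hv : v ∈ Set.range ⇑x
      · obtain ⟨i, rfl⟩ := hv
        have h1 : φ (x i) = xP i := phi_x H wH x i
        rw [Set.mem_preimage, Set.mem_preimage, h1, mu_x]
        rw [hinlX' (y i), ← hmuX i, hb1 i]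
      · have h1 : φ v ∉ Set.range ⇑xP := by
          rwa [hxP, hφ, phi_mem_range_iff]
        rw [Set.mem_preimage, Set.mem_preimage, mu_int ⇑y xP (φ v) h1]
        rw [hinrX' ⟨φ v, h1⟩]
        have : (⟨φ v, h1⟩ : {j // j ∉ Set.range ⇑xP}) ∈ XR ↔ φ v ∈ φ '' Wset := Iff.rfl
        rw [this]
        constructor
        · intro hmem
          have : v ∈ φ ⁻¹' (φ '' Wset) := hmem
          rwa [hb3] at this
        · intro hmem
          exact ⟨v, hmem, rfl⟩
    have hX'1 : X'.Nonempty := by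
      by_cases hF : (Sum.inl ⁻¹' X).Nonempty
      · obtain ⟨a, ha⟩ := hF
        exact ⟨Sum.inl a, Or.inl ⟨a, ha, rfl⟩⟩
      · obtain ⟨w, hw⟩ := hX1
        match w with
        | Sum.inl a => exact absurd ⟨a, hw⟩ hF
        | Sum.inr b =>
          have hZint : Z ∩ Set.range ⇑x = ∅ := by
            rw [Set.eq_empty_iff_forall_notMem]
            rintro u ⟨huZ, i, rfl⟩
            exact hF ⟨y i, (hmuX i).mp huZ⟩
          have hZb : b.1 ∈ Z := by
            rw [hZ, Set.mem_preimage, mu_int ⇑y x b.1 b.2]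
            rwa [Subtype.coe_eta]
          obtain ⟨v, hvW, hvint⟩ := hb4 hZint ⟨b.1, hZb, b.2⟩
          have h1 : φ v ∉ Set.range ⇑xP := by
            rwa [hxP, hφ, phi_mem_range_iff]
          exact ⟨Sum.inr ⟨φ v, h1⟩, Or.inr ⟨⟨φ v, h1⟩, ⟨v, hvW, rfl⟩, rfl⟩⟩
    have hX'2 : X'ᶜ.Nonempty := by
      by_cases hFc : ∃ a : VF, Sum.inl a ∉ X
      · obtain ⟨a, ha⟩ := hFc
        refine ⟨Sum.inl a, fun hmem => ha ((hinlX' a).mp hmem)⟩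
      · push_neg at hFc
        have hsubZ : Set.range ⇑x ⊆ Z := by
          rintro - ⟨i, rfl⟩
          exact (hmuX i).mpr (hFc (y i))
        obtain ⟨w, hw⟩ := hX2
        match w with
        | Sum.inl a => exact absurd (hFc a) hw
        | Sum.inr b =>
          have hbZ : b.1 ∉ Z := by
            rw [hZ, Set.mem_preimage, mu_int ⇑y x b.1 b.2]
            rwa [Subtype.coe_eta]
          obtain ⟨v, hvW, hvint⟩ := hb5 hsubZ ⟨b.1, hbZ, b.2⟩
          have h1 : φ v ∉ Set.range ⇑xP := by
            rwa [hxP, hφ, phi_mem_range_iff]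
          refine ⟨Sum.inr ⟨φ v, h1⟩, fun hmem => ?_⟩
          have : (⟨φ v, h1⟩ : {j // j ∉ Set.range ⇑xP}) ∈ XR := (hinrX' _).mp hmem
          have : v ∈ φ ⁻¹' (φ '' Wset) := this
          rw [hb3] at this
          exact hvW this
    refine le_trans (iInf_cut_le _ _ X' hX'1 hX'2) (Nat.cast_le.mpr ?_)
    calc cutw (BSum F ⇑y H' ⇑xP) (BSumW wF w' ⇑y ⇑xP) X'
        = cutw F wF (Sum.inl ⁻¹' X') + cutw H' w' (mu ⇑y xP ⁻¹' X') :=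
          cutw_BSum F wF y H' w' xP hbb' X'
      _ = cutw F wF (Sum.inl ⁻¹' X) + cutw H wH Wset := by
          rw [hf1, hH', cutw_pushGraph, hf2]
      _ ≤ cutw F wF (Sum.inl ⁻¹' X) + cutw H wH Z := by
          exact Nat.add_le_add_left hb2 _
      _ = cutw (BSum F ⇑y H ⇑x) (BSumW wF wH ⇑y ⇑x) X :=
          (cutw_BSum F wF y H wH x hbb X).symm
  · refine le_iInf fun X' => le_iInf fun h1 => le_iInf fun h2 => ?_
    set PM : (VF ⊕ {v : VH // v ∉ Set.range ⇑x}) →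
        (VF ⊕ {j : Fin (r + nC H wH x) // j ∉ Set.range ⇑xP}) :=
      Sum.map id (fun b => ⟨φ b.1, by
        rw [hxP, hφ, phi_mem_range_iff]; exact b.2⟩) with hPM
    set X : Set (VF ⊕ {v : VH // v ∉ Set.range ⇑x}) := PM ⁻¹' X' with hX
    have g1 : Sum.inl ⁻¹' X = Sum.inl ⁻¹' X' := rfl
    have gcomm : ∀ v : VH, PM (mu ⇑y x v) = mu ⇑y xP (φ v) := by
      intro v
      by_cases hv : v ∈ Set.range ⇑x
      · obtain ⟨i, rfl⟩ := hv
        have h1 : φ (x i) = xP i := phi_x H wH x i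
        rw [mu_x, h1, mu_x]
        rfl
      · have h1 : φ v ∉ Set.range ⇑xP := by
          rwa [hxP, hφ, phi_mem_range_iff]
        rw [mu_int ⇑y x v hv, mu_int ⇑y xP (φ v) h1]
        rfl
    have g2 : mu ⇑y x ⁻¹' X = φ ⁻¹' (mu ⇑y xP ⁻¹' X') := by
      ext v
      simp only [hX, Set.mem_preimage]
      rw [gcomm v]
    have hPMsurj : Function.Surjective PM := by
      rintro (a | ⟨j, hj⟩)
      · exact ⟨Sum.inl a, rfl⟩
      · obtain ⟨u, rfl⟩ := phi_surjective H wH x j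
        have hu : u ∉ Set.range ⇑x := by
          rw [← phi_mem_range_iff H wH x]
          exact hj
        refine ⟨Sum.inr ⟨u, hu⟩, ?_⟩
        simp only [hPM, Sum.map_inr]
        rfl
    have hXne : X.Nonempty := by
      obtain ⟨w', hw'⟩ := h1
      obtain ⟨w, rfl⟩ := hPMsurj w'
      exact ⟨w, hw'⟩
    have hXcne : Xᶜ.Nonempty := by
      obtain ⟨w', hw'⟩ := h2
      obtain ⟨w, rfl⟩ := hPMsurj w'
      exact ⟨w, hw'⟩
    refine le_trans (iInf_cut_le _ _ X hXne hXcne) (Nat.cast_le.mpr (le_of_eq ?_))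
    calc cutw (BSum F ⇑y H ⇑x) (BSumW wF wH ⇑y ⇑x) X
        = cutw F wF (Sum.inl ⁻¹' X) + cutw H wH (mu ⇑y x ⁻¹' X) :=
          cutw_BSum F wF y H wH x hbb X
      _ = cutw F wF (Sum.inl ⁻¹' X') + cutw H' w' (mu ⇑y xP ⁻¹' X') := by
          rw [g1, g2, hH', cutw_pushGraph]
      _ = cutw (BSum F ⇑y H' ⇑xP) (BSumW wF w' ⇑y ⇑xP) X' :=
          (cutw_BSum F wF y H' w' xP hbb' X').symm

/-- Let `(H,x)` be a properly `r`-boundaried weighted graph and `p` a positive integer,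
and suppose that every component of `H` with a vertex outside the boundary has a vertex
`v` outside the boundary with `λ_H(x ∩ V(C), v) ≤ p`. Then there is a properly
`r`-boundaried weighted graph `(H',x')` with at most `2^{2^{r-1}} + r` vertices such
that (a) for every `r`-boundaried weighted graph `(F,y)`, if `(F,y) ⊕_b (H,x)` is
connected with weighted connectivity at most `p`, then `(F,y) ⊕_b (H',x')` has the same
weighted connectivity; and (b) every component of `H'` with a vertex outside `x'` has a
vertex `v` outside `x'` with `λ_{H'}(x' ∩ V(C'), v) ≤ p`. -/
theorem stmt_8 {r p : ℕ} (hp : 0 < p) {VH : Type*} [Fintype VH]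
    (H : SimpleGraph VH) (wH : Sym2 VH → ℕ) (hwH : ∀ e ∈ H.edgeSet, 0 < wH e)
    (x : Fin r ↪ VH) (hx : ProperB H x) (hreach : BdryReach H wH x p) :
    ∃ (n : ℕ) (H' : SimpleGraph (Fin n)) (w' : Sym2 (Fin n) → ℕ) (x' : Fin r ↪ Fin n),
      n ≤ 2 ^ 2 ^ (r - 1) + r ∧ ProperB H' x' ∧ (∀ e ∈ H'.edgeSet, 0 < w' e) ∧
      (∀ (VF : Type*) [Fintype VF] (F : SimpleGraph VF) (wF : Sym2 VF → ℕ),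
        (∀ e ∈ F.edgeSet, 0 < wF e) → ∀ y : Fin r ↪ VF,
        (BSum F ⇑y H ⇑x).Connected →
        weightConn (BSum F ⇑y H ⇑x) (BSumW wF wH ⇑y ⇑x) ≤ (p : ℕ∞) →
        weightConn (BSum F ⇑y H' ⇑x') (BSumW wF w' ⇑y ⇑x') =
          weightConn (BSum F ⇑y H ⇑x) (BSumW wF wH ⇑y ⇑x)) ∧
      BdryReach H' w' x' p := by
  refine ⟨r + nC H wH x, pushGraph H (phi H wH x), pushW H wH (phi H wH x), xp H wH x,
    ?_, properB_push H wH x hx, pushW_pos H wH x hwH, ?_,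
    bdryReach_push H wH x hx hreach⟩
  · simpa [Nat.add_comm] using Nat.add_le_add_right (nC_le H wH x) r
  · intro VF _ F wF hwF y hconn hle
    haveI : Nonempty VF := by
      obtain ⟨w⟩ := hconn.nonempty
      match w with
      | Sum.inl a => exact ⟨a⟩
      | Sum.inr b =>
        obtain ⟨i, -⟩ := hx.2 b.1
        exact ⟨y i⟩
    exact weightConn_push_eq H wH x hx F wF y
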